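/- If X⃗=x⃗ causes Y=y in (M,u⃗) according to Def 3 (contrastive necessity with actual direct sufficiency), then X⃗ is a singleton {X} and X is a parent of Y in M. -/
import Mathlib


open Classical

/-- A strongly recursive structural-equations (causal) model with exogenous
variables `U`, endogenous variables `V`, and values in `α`.  `rng v` is the
range `R(v)` of an endogenous variable; `F v u s` is the structural equation of
`v` evaluated in context `u` at the assignment `s` (it does not depend on
`s v`); `solve Z g u` is the unique solution of the model obtained by
intervening `Z ← g` in context `u`; `actual u` is the actual world of context
`u`; `prec` is a well-founded order witnessing strong recursivity. -/
structure CausalModel (U V α : Type) where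
  rng : V → Set α
  F : V → U → (V → α) → α
  F_rng : ∀ (v : V) (u : U) (s : V → α), F v u s ∈ rng v
  F_self : ∀ (v : V) (u : U) (s s' : V → α), (∀ w, w ≠ v → s w = s' w) → F v u s = F v u s'
  solve : Set V → (V → α) → U → V → α
  solve_mem : ∀ (Z : Set V) (g : V → α) (u : U), ∀ v ∈ Z, solve Z g u v = g v
  solve_not_mem : ∀ (Z : Set V) (g : V → α) (u : U) (v : V), v ∉ Z →
    solve Z g u v = F v u (solve Z g u)
  solve_unique : ∀ (Z : Set V) (g : V → α) (u : U) (s : V → α),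
    (∀ v ∈ Z, s v = g v) → (∀ v ∉ Z, s v = F v u s) → s = solve Z g u
  actual : U → V → α
  actual_def : ∀ (g : V → α) (u : U), solve ∅ g u = actual u
  prec : V → V → Prop
  prec_wf : WellFounded prec
  prec_dep : ∀ a b : V, (∃ (u : U) (s s' : V → α), (∀ w, s w ∈ rng w) ∧ (∀ w, s' w ∈ rng w) ∧
    (∀ w, w ≠ a → s w = s' w) ∧ F b u s ≠ F b u s') → prec a b

namespace CausalModel

variable {U V α : Type}

/-- The assignment that is `x` on `X` and `g` elsewhere. -/
noncomputable def merge (X : Set V) (x g : V → α) : V → α :=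
  fun v => if v ∈ X then x v else g v

/-- `g` is a valid setting: every variable gets a value in its range. -/
def Setting (M : CausalModel U V α) (g : V → α) : Prop := ∀ v, g v ∈ M.rng v

/-- `X⃗=x⃗` is directly sufficient for `Y⃗=y⃗`: in every context, intervening
`X⃗ ← x⃗` together with arbitrary (in-range) values for all remaining variables
`C⃗ = V ∖ (X⃗ ∪ Y⃗)` yields `Y⃗ = y⃗`. -/
def directlySuff (M : CausalModel U V α) (X : Set V) (x : V → α) (Y : Set V) (y : V → α) : Prop :=
  ∀ g : V → α, M.Setting g → (∀ v ∈ X, g v = x v) →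
    ∀ u : U, ∀ v ∈ Y, M.solve (X ∪ (X ∪ Y)ᶜ) g u v = y v

/-- Actual direct sufficiency: as `directlySuff` but only in the given context `u`. -/
def actDirectlySuff (M : CausalModel U V α) (u : U) (X : Set V) (x : V → α)
    (Y : Set V) (y : V → α) : Prop :=
  ∀ g : V → α, M.Setting g → (∀ v ∈ X, g v = x v) →
    ∀ v ∈ Y, M.solve (X ∪ (X ∪ Y)ᶜ) g u v = y v

/-- `X⃗=x⃗` is weakly sufficient for `Y⃗=y⃗`: in every context, `[X⃗ ← x⃗] Y⃗=y⃗`. -/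
def weaklySuff (M : CausalModel U V α) (X : Set V) (x : V → α) (Y : Set V) (y : V → α) : Prop :=
  ∀ u : U, ∀ v ∈ Y, M.solve X x u v = y v

/-- Actual weak sufficiency in context `u`: `(M,u) ⊨ [X⃗ ← x⃗] Y⃗=y⃗`. -/
def actWeaklySuff (M : CausalModel U V α) (u : U) (X : Set V) (x : V → α)
    (Y : Set V) (y : V → α) : Prop :=
  ∀ v ∈ Y, M.solve X x u v = y v

/-- `X⃗=x⃗` is strongly sufficient for `Y⃗=y⃗`: it is directly sufficient for some
superset `N⃗ ⊇ Y⃗` with values extending `y⃗`. -/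
def stronglySuff (M : CausalModel U V α) (X : Set V) (x : V → α) (Y : Set V) (y : V → α) : Prop :=
  ∃ (N : Set V) (n : V → α), Y ⊆ N ∧ (∀ v ∈ Y, n v = y v) ∧ M.directlySuff X x N n

/-- Actual strong sufficiency of `X⃗=x⃗` for the single effect `Y0 = y` along the
network `N` in context `u`. -/
def actStronglySuffNet (M : CausalModel U V α) (u : U) (X : Set V) (x : V → α)
    (Y0 : V) (y : α) (N : Set V) : Prop :=
  ∃ n : V → α, Y0 ∈ N ∧ n Y0 = y ∧ M.actDirectlySuff u X x N n

/-- `a` is a parent of `b`: the equation of `b` depends on the value of `a`. -/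
def IsParent (M : CausalModel U V α) (a b : V) : Prop :=
  ∃ (u : U) (s s' : V → α), M.Setting s ∧ M.Setting s' ∧
    (∀ w, w ≠ a → s w = s' w) ∧ M.F b u s ≠ M.F b u s'

/-- `a` is only a parent of `b`: the single edge `a → b` is the only directed
path from `a` to `b`. -/
def OnlyParent (M : CausalModel U V α) (a b : V) : Prop :=
  M.IsParent a b ∧ ¬ ∃ z, M.IsParent a z ∧ Relation.TransGen M.IsParent z b

/-- `R` is the set of root variables: equations of members of `R` depend only on
the context, and equations of all other variables do not depend on the context
(exogenous variables appear only in equations of the form `V = U`). -/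
def IsRootSet (M : CausalModel U V α) (R : Set V) : Prop :=
  (∀ v ∈ R, ∀ (u : U) (s s' : V → α), M.F v u s = M.F v u s') ∧
  (∀ v ∉ R, ∀ (u u' : U) (s : V → α), M.F v u s = M.F v u' s)

/-- Def 2: contrastive necessity with actual strong sufficiency (AC1, AC2, AC3). -/
def CauseDef2 (M : CausalModel U V α) (u : U) (X : Set V) (x : V → α) (Y0 : V) (y : α) : Prop :=
  (∀ v ∈ X, M.actual u v = x v) ∧ M.actual u Y0 = y ∧
  (∃ (W N : Set V) (x' : V → α), Disjoint W (X ∪ {Y0}) ∧ (∀ v ∈ X, x' v ∈ M.rng v) ∧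
      M.actStronglySuffNet u (X ∪ W) (merge X x (M.actual u)) Y0 y N ∧
      ∀ S ⊆ N, ¬ M.actStronglySuffNet u (X ∪ W) (merge X x' (M.actual u)) Y0 y S) ∧
  (∀ X' ⊂ X, ¬ ∃ (W N : Set V) (x' : V → α), Disjoint W (X' ∪ {Y0}) ∧
      (∀ v ∈ X', x' v ∈ M.rng v) ∧
      M.actStronglySuffNet u (X' ∪ W) (merge X' x (M.actual u)) Y0 y N ∧
      ∀ S ⊆ N, ¬ M.actStronglySuffNet u (X' ∪ W) (merge X' x' (M.actual u)) Y0 y S)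

/-- Def 3: contrastive necessity with actual direct sufficiency (AC1, AC2, AC3). -/
def CauseDef3 (M : CausalModel U V α) (u : U) (X : Set V) (x : V → α) (Y0 : V) (y : α) : Prop :=
  (∀ v ∈ X, M.actual u v = x v) ∧ M.actual u Y0 = y ∧
  (∃ (W : Set V) (x' : V → α), Disjoint W (X ∪ {Y0}) ∧ (∀ v ∈ X, x' v ∈ M.rng v) ∧
      M.actDirectlySuff u (X ∪ W) (merge X x (M.actual u)) {Y0} (fun _ => y) ∧
      ¬ M.actDirectlySuff u (X ∪ W) (merge X x' (M.actual u)) {Y0} (fun _ => y)) ∧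
  (∀ X' ⊂ X, ¬ ∃ (W : Set V) (x' : V → α), Disjoint W (X' ∪ {Y0}) ∧
      (∀ v ∈ X', x' v ∈ M.rng v) ∧
      M.actDirectlySuff u (X' ∪ W) (merge X' x (M.actual u)) {Y0} (fun _ => y) ∧
      ¬ M.actDirectlySuff u (X' ∪ W) (merge X' x' (M.actual u)) {Y0} (fun _ => y))

/-- Def 4 (singleton cause): contrastive necessity with non-actual weak sufficiency. -/
def CauseDef4 (M : CausalModel U V α) (u : U) (X0 : V) (x0 : α) (Y0 : V) (y : α) : Prop :=
  M.actual u X0 = x0 ∧ M.actual u Y0 = y ∧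
  ∃ (W : Set V) (x' : α), Disjoint W ({X0} ∪ {Y0} : Set V) ∧ x' ∈ M.rng X0 ∧
    M.weaklySuff ({X0} ∪ W) (merge {X0} (fun _ => x0) (M.actual u)) {Y0} (fun _ => y) ∧
    ¬ M.weaklySuff ({X0} ∪ W) (merge {X0} (fun _ => x') (M.actual u)) {Y0} (fun _ => y)

/-- Def 8 (singleton cause): minimal necessity with actual strong sufficiency
(minimality AC3 is automatic for singletons). -/
def CauseDef8 (M : CausalModel U V α) (u : U) (X0 : V) (x0 : α) (Y0 : V) (y : α) : Prop :=
  M.actual u X0 = x0 ∧ M.actual u Y0 = y ∧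
  ∃ W N : Set V, Disjoint W ({X0} ∪ {Y0} : Set V) ∧
    M.actStronglySuffNet u ({X0} ∪ W) (merge {X0} (fun _ => x0) (M.actual u)) Y0 y N ∧
    ∀ S ⊆ N, ¬ M.actStronglySuffNet u W (M.actual u) Y0 y S

/-- Def 10 (singleton cause): minimal necessity with non-actual weak sufficiency. -/
def CauseDef10 (M : CausalModel U V α) (u : U) (X0 : V) (x0 : α) (Y0 : V) (y : α) : Prop :=
  M.actual u X0 = x0 ∧ M.actual u Y0 = y ∧
  ∃ W : Set V, Disjoint W ({X0} ∪ {Y0} : Set V) ∧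
    M.weaklySuff ({X0} ∪ W) (merge {X0} (fun _ => x0) (M.actual u)) {Y0} (fun _ => y) ∧
    ¬ M.weaklySuff W (M.actual u) {Y0} (fun _ => y)

end CausalModel

namespace CausalModel

/-- Characterization of actual direct sufficiency for a single effect:
the intervention set is everything except `Y0`, so the condition is just about
the structural equation of `Y0`. -/
lemma actDirectlySuff_iff_F {U V α : Type} (M : CausalModel U V α) (u : U) (A : Set V)
    (xv : V → α) (Y0 : V) (y : α) (hY : Y0 ∉ A) :
    M.actDirectlySuff u A xv {Y0} (fun _ => y) ↔
      ∀ g : V → α, M.Setting g → (∀ v ∈ A, g v = xv v) → M.F Y0 u g = y := by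
  have key : ∀ g : V → α, M.solve (A ∪ (A ∪ {Y0})ᶜ) g u Y0 = M.F Y0 u g := by
    intro g
    have hY0 : Y0 ∉ A ∪ (A ∪ {Y0})ᶜ := by simp [hY]
    rw [M.solve_not_mem _ _ _ _ hY0]
    apply M.F_self
    intro w hw
    apply M.solve_mem
    by_cases hwA : w ∈ A
    · exact Or.inl hwA
    · exact Or.inr (by simp [hwA, hw])
  constructor
  · intro h g hs hag
    have := h g hs hag Y0 rfl
    rwa [key] at this
  · intro h g hs hag v hv
    have hv' : v = Y0 := hv
    subst hv'
    rw [key]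
    exact h g hs hag

/-- Every value of the actual world lies in the corresponding range. -/
lemma actual_mem_rng {U V α : Type} (M : CausalModel U V α) (u : U) (g : V → α) (v : V) :
    M.actual u v ∈ M.rng v := by
  have h1 : M.solve ∅ g u = M.actual u := M.actual_def g u
  have h2 : M.solve ∅ g u v = M.F v u (M.solve ∅ g u) :=
    M.solve_not_mem ∅ g u v (by simp)
  rw [← h1, h2]
  exact M.F_rng v u _

/-- a cause according to Def 3 (contrastive necessity with actual
direct sufficiency) is a singleton `{X}` with `X` a parent of `Y`. -/
theorem def3_singleton_parent {U V α : Type} (M : CausalModel U V α) (u : U)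
    (X : Set V) (x : V → α) (Y0 : V) (y : α)
    (hYX : Y0 ∉ X) (hne : X.Nonempty)
    (h : CauseDef3 M u X x Y0 y) :
    ∃ X0, X = {X0} ∧ M.IsParent X0 Y0 := by
  obtain ⟨hAC1, hAC1Y, ⟨W, x', hdisj, hrng, hpos, hneg⟩, hmin⟩ := h
  have hWX : ∀ v ∈ W, v ∉ X := fun v hv hvX =>
    (Set.disjoint_left.mp hdisj hv) (Or.inl hvX)
  have hWY : ∀ v ∈ W, v ≠ Y0 := fun v hv hvY =>
    (Set.disjoint_left.mp hdisj hv) (Or.inr hvY)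
  have hY0XW : Y0 ∉ X ∪ W := by
    simp only [Set.mem_union, not_or]
    exact ⟨hYX, fun h1 => hWY Y0 h1 rfl⟩
  -- F-form of positivity for X
  have hpos' : ∀ g : V → α, M.Setting g → (∀ v ∈ X, g v = x v) →
      (∀ v ∈ W, g v = M.actual u v) → M.F Y0 u g = y := by
    intro g hs hgX hgW
    refine (actDirectlySuff_iff_F M u (X ∪ W) _ Y0 y hY0XW).mp hpos g hs ?_
    rintro v (hv | hv)
    · simp only [merge, if_pos hv]; exact hgX v hv
    · simp only [merge, if_neg (hWX v hv)]; exact hgW v hv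
  -- F-form of negativity: a witness g'
  obtain ⟨g', hs', hag', hF'⟩ : ∃ g' : V → α, M.Setting g' ∧
      (∀ v ∈ X ∪ W, g' v = merge X x' (M.actual u) v) ∧ M.F Y0 u g' ≠ y := by
    rw [actDirectlySuff_iff_F M u (X ∪ W) _ Y0 y hY0XW] at hneg
    push_neg at hneg
    exact hneg
  have hg'X : ∀ v ∈ X, g' v = x' v := by
    intro v hv
    rw [hag' v (Or.inl hv)]; simp [merge, hv]
  have hg'W : ∀ v ∈ W, g' v = M.actual u v := by
    intro v hv
    rw [hag' v (Or.inr hv)]; simp [merge, hWX v hv]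
  -- Key lemma S_b: for b ∈ X, any setting fixing b at x b and W at actual gives F = y.
  have hS : ∀ b ∈ X, ∀ g : V → α, M.Setting g → g b = x b →
      (∀ v ∈ W, g v = M.actual u v) → M.F Y0 u g = y := by
    intro b hb g hg hgb hgW
    by_contra hF
    have hsub : X \ {b} ⊂ X := by
      constructor
      · exact Set.diff_subset
      · intro hsub'
        exact (hsub' hb).2 rfl
    have hbY0 : b ≠ Y0 := fun h => hYX (h ▸ hb)
    have hY0A : Y0 ∉ (X \ {b}) ∪ (W ∪ {b}) := by
      simp only [Set.mem_union, Set.mem_diff, Set.mem_singleton_iff, not_or]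
      exact ⟨fun h1 => hYX h1.1, fun h1 => hWY Y0 h1 rfl, fun h1 => hbY0 h1.symm⟩
    refine hmin (X \ {b}) hsub ⟨W ∪ {b}, g, ?_, fun v _ => hg v, ?_, ?_⟩
    · -- disjointness
      rw [Set.disjoint_left]
      intro v hv hv2
      simp only [Set.mem_union, Set.mem_singleton_iff] at hv
      simp only [Set.mem_union, Set.mem_diff, Set.mem_singleton_iff] at hv2
      rcases hv with hv | hv
      · rcases hv2 with hv2 | hv2
        · exact hWX v hv hv2.1
        · exact hWY v hv hv2
      · rcases hv2 with hv2 | hv2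
        · exact hv2.2 hv
        · exact hbY0 (hv ▸ hv2)
    · -- positive part for X \ {b}
      rw [actDirectlySuff_iff_F M u _ _ Y0 y hY0A]
      intro g₂ hs₂ hag₂
      refine hpos' g₂ hs₂ ?_ ?_
      · intro v hv
        by_cases hvb : v = b
        · have hmem : v ∈ X \ {b} ∪ (W ∪ {b}) :=
            Or.inr (Or.inr (Set.mem_singleton_iff.mpr hvb))
          rw [hag₂ v hmem]
          have hnot : v ∉ X \ {b} := fun h => h.2 hvb
          simp only [merge, if_neg hnot]
          exact hAC1 v hv
        · have hmem : v ∈ X \ {b} ∪ (W ∪ {b}) := Or.inl ⟨hv, hvb⟩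
          rw [hag₂ v hmem]
          simp only [merge, if_pos (show v ∈ X \ {b} from ⟨hv, hvb⟩)]
      · intro v hv
        rw [hag₂ v (Or.inr (Or.inl hv))]
        have hnot : v ∉ X \ {b} := fun h => hWX v hv h.1
        simp only [merge, if_neg hnot]
    · -- negative part for X \ {b} fails: g itself is a counterexample
      rw [actDirectlySuff_iff_F M u _ _ Y0 y hY0A]
      intro hsuff
      apply hF
      refine hsuff g hg ?_
      intro v hv
      rcases hv with hv | hv
      · simp only [merge, if_pos hv]
      · rcases hv with hv | hv
        · rw [hgW v hv]
          have hnot : v ∉ X \ {b} := fun h => hWX v hv h.1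
          simp only [merge, if_neg hnot]
        · have hvb : v = b := Set.mem_singleton_iff.mp hv
          have hnot : v ∉ X \ {b} := fun h => h.2 hvb
          simp only [merge, if_neg hnot]
          rw [hvb, hgb]
          exact (hAC1 b hb).symm
  obtain ⟨a, ha⟩ := hne
  -- singleton
  have hsing : X = {a} := by
    apply Set.eq_singleton_iff_unique_mem.mpr
    refine ⟨ha, ?_⟩
    intro c hc
    by_contra hca
    have hsub : ({a} : Set V) ⊂ X := by
      constructor
      · intro v hv; have h1 : v = a := hv; exact h1.symm ▸ ha
      · intro hsub'
        exact hca (hsub' hc)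
    have haY0 : a ≠ Y0 := fun h => hYX (h ▸ ha)
    have hY0A : Y0 ∉ ({a} : Set V) ∪ W := by
      rintro (h1 | h1)
      · exact haY0 (Set.mem_singleton_iff.mp h1).symm
      · exact hWY Y0 h1 rfl
    refine hmin {a} hsub ⟨W, x', ?_, ?_, ?_, ?_⟩
    · rw [Set.disjoint_left]
      rintro v hv (hv2 | hv2)
      · exact hWX v hv ((Set.mem_singleton_iff.mp hv2).symm ▸ ha)
      · exact hWY v hv hv2
    · intro v hv
      exact hrng v ((Set.mem_singleton_iff.mp hv).symm ▸ ha)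
    · rw [actDirectlySuff_iff_F M u _ _ Y0 y hY0A]
      intro g₂ hs₂ hag₂
      refine hS a ha g₂ hs₂ ?_ ?_
      · have := hag₂ a (Or.inl rfl)
        rw [this]; simp [merge]
      · intro v hv
        have := hag₂ v (Or.inr hv)
        rw [this]
        have hva : v ∉ ({a} : Set V) := fun h =>
          hWX v hv ((Set.mem_singleton_iff.mp h).symm ▸ ha)
        simp [merge, hva]
    · rw [actDirectlySuff_iff_F M u _ _ Y0 y hY0A]
      intro hsuff
      apply hF'
      refine hsuff g' hs' ?_
      rintro v (hv | hv)
      · have hva : v = a := hv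
        subst hva
        rw [hg'X v ha]; simp [merge]
      · rw [hg'W v hv]
        have hva : v ∉ ({a} : Set V) := fun h =>
          hWX v hv ((Set.mem_singleton_iff.mp h).symm ▸ ha)
        simp [merge, hva]
  -- parenthood
  refine ⟨a, hsing, u, Function.update g' a (x a), g', ?_, hs', ?_, ?_⟩
  · intro v
    by_cases hva : v = a
    · subst hva
      rw [Function.update_self, ← hAC1 v ha]
      exact actual_mem_rng M u g' v
    · rw [Function.update_of_ne hva]
      exact hs' v
  · intro w hw
    exact Function.update_of_ne hw _ _
  · have h1 : M.F Y0 u (Function.update g' a (x a)) = y := by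
      refine hS a ha _ ?_ (Function.update_self a (x a) g') ?_
      · intro v
        by_cases hva : v = a
        · subst hva
          rw [Function.update_self, ← hAC1 v ha]
          exact actual_mem_rng M u g' v
        · rw [Function.update_of_ne hva]
          exact hs' v
      · intro v hv
        rw [Function.update_of_ne (fun h => hWX v hv (by rw [h]; exact ha))]
        exact hg'W v hv
    rw [h1]
    exact fun h => hF' h.symm

end CausalModel
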